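/- arXiv:2409.03590 — 3 statements merged into one kernel-verified Lean document; each statement's English description precedes it below -/
import Mathlib

section
/- The function φ(z) = Σ_{d≥0} (2d)!/(d!)^5 · z^{3d} satisfies the scalar ODE D^4φ − 108 z^3 Dφ − 162 z^3 φ = 0, where D = z·d/dz. -/
open PowerSeries

/-- The quantum period `φ(z) = Σ_{d≥0} (2d)!/(d!)^5 z^{3d}` of `LG(2,4)` satisfies the
scalar ODE `D⁴φ − 108 z³ Dφ − 162 z³ φ = 0`, where `D = z d/dz` is the Euler operator
(acting on formal power series by `D(Σ aₙ zⁿ) = Σ n aₙ zⁿ`). -/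
theorem quantum_period_satisfies_ODE :
    let D : PowerSeries ℂ → PowerSeries ℂ :=
      fun f => PowerSeries.mk fun n => (n : ℂ) * PowerSeries.coeff (R := ℂ) n f
    let φ : PowerSeries ℂ :=
      PowerSeries.mk fun n =>
        if 3 ∣ n then ((2 * (n / 3)).factorial : ℂ) / ((n / 3).factorial : ℂ) ^ 5 else 0
    D (D (D (D φ))) - 108 * (PowerSeries.X : PowerSeries ℂ) ^ 3 * D φ
      - 162 * (PowerSeries.X : PowerSeries ℂ) ^ 3 * φ = 0 := by
  intro D φ
  have h108 : (108 : PowerSeries ℂ) = PowerSeries.C 108 := (map_ofNat _ _).symm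
  have h162 : (162 : PowerSeries ℂ) = PowerSeries.C 162 := (map_ofNat _ _).symm
  ext n
  simp only [map_sub, map_zero, h108, h162, mul_assoc, coeff_C_mul,
    PowerSeries.coeff_X_pow_mul', D, φ, PowerSeries.coeff_mk]
  by_cases h3 : 3 ∣ n
  · obtain ⟨d, rfl⟩ := h3
    cases d with
    | zero => norm_num
    | succ d =>
      have hle : 3 ≤ 3 * (d + 1) := by omega
      have hsub : 3 * (d + 1) - 3 = 3 * d := by omega
      have hdvd : 3 ∣ 3 * d := ⟨d, rfl⟩
      have hdvd1 : 3 ∣ 3 * (d + 1) := ⟨d + 1, rfl⟩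
      have hdiv1 : 3 * (d + 1) / 3 = d + 1 := by omega
      have hdiv2 : 3 * d / 3 = d := by omega
      rw [if_pos hle, if_pos hle, hsub, hdiv1, hdiv2,
        if_pos hdvd, if_pos hdvd1]
      have hf1 : (2 * (d + 1)).factorial = (2 * d + 2) * ((2 * d + 1) * (2 * d).factorial) := by
        have : 2 * (d + 1) = (2 * d + 1) + 1 := by ring
        rw [this, Nat.factorial_succ, Nat.factorial_succ]
      have hf2 : (d + 1).factorial = (d + 1) * d.factorial := Nat.factorial_succ d
      have hne1 : ((d.factorial : ℂ)) ≠ 0 := Nat.cast_ne_zero.2 d.factorial_pos.ne'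
      have hne2 : ((d : ℂ) + 1) ≠ 0 := by
        exact_mod_cast (Nat.cast_ne_zero (R := ℂ)).2 (Nat.succ_ne_zero d)
      rw [hf1, hf2]
      push_cast
      field_simp
      ring
  · have h3' : ¬ (3 ∣ n - 3) ∨ ¬ 3 ≤ n := by
      by_cases h : 3 ≤ n
      · left; intro hd; exact h3 (by omega)
      · right; exact h
    rw [if_neg h3]
    rcases h3' with h | h
    · by_cases hle : 3 ≤ n <;> simp [hle, h]
    · rw [if_neg h, if_neg h]; ring
end

section
/- The 4×4 matrix 𝒰 with rows (0,0,3,0), (3,0,0,3), (0,6,0,0), (0,0,3,0) has characteristic polynomial λ⁴ − 108λ and four distinct eigenvalues 0, 3·2^{2/3}, 3·2^{2/3}e^{2πi/3}, 3·2^{2/3}e^{4πi/3}. -/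
open Polynomial

/-- The matrix `𝒰` of quantum multiplication by the Euler vector field of `LG(2,4)` at
`q = 1` (in the Schubert basis) has characteristic polynomial `λ⁴ − 108λ` and four
distinct eigenvalues `0, 3·2^{2/3}, 3·2^{2/3}e^{2πi/3}, 3·2^{2/3}e^{4πi/3}`. -/
theorem LG24_Euler_matrix_charpoly_eigenvalues :
    let U : Matrix (Fin 4) (Fin 4) ℂ :=
      !![0, 0, 3, 0; 3, 0, 0, 3; 0, 6, 0, 0; 0, 0, 3, 0]
    let a : ℂ := (2 : ℂ) ^ ((2 : ℂ) / 3)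
    let ω : ℂ := Complex.exp (2 * Real.pi * Complex.I / 3)
    let ev : Fin 4 → ℂ := ![0, 3 * a, 3 * a * ω, 3 * a * ω ^ 2]
    U.charpoly = X ^ 4 - C 108 * X ∧
      Function.Injective ev ∧
      ∀ i : Fin 4, Module.End.HasEigenvalue (Matrix.toLin' U) (ev i) := by
  intro U a ω ev
  have hω3 : IsPrimitiveRoot ω 3 := by
    have := Complex.isPrimitiveRoot_exp 3 (by norm_num)
    simpa using this
  have hωpow : ω ^ 3 = 1 := hω3.pow_eq_one
  have hω1 : ω ≠ 1 := hω3.ne_one (by norm_num)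
  have hω0 : ω ≠ 0 := by
    intro h
    rw [h] at hωpow
    simp at hωpow
  have hω21 : ω ^ 2 ≠ 1 := hω3.pow_ne_one_of_pos_of_lt (by norm_num) (by norm_num)
  have hωω2 : ω ≠ ω ^ 2 := by
    intro h
    apply hω1
    have : ω * 1 = ω * ω := by rw [mul_one, ← sq, ← h]
    exact ((mul_left_cancel₀ hω0 this)).symm
  have ha3 : a ^ 3 = 4 := by
    show ((2 : ℂ) ^ ((2 : ℂ) / 3)) ^ 3 = 4
    rw [← Complex.cpow_mul_nat]
    have h2 : (2 : ℂ) / 3 * (3 : ℕ) = ((2 : ℕ) : ℂ) := by norm_num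
    rw [h2, Complex.cpow_natCast]
    norm_num
  have ha0 : a ≠ 0 := by
    intro h
    rw [h] at ha3
    norm_num at ha3
  -- the roots satisfy μ ^ 4 = 108 μ
  have hroot : ∀ i : Fin 4, (ev i) ^ 4 = 108 * ev i := by
    intro i
    fin_cases i
    · simp [ev]
    · show (3 * a) ^ 4 = 108 * (3 * a)
      have : (3 * a) ^ 4 = 81 * (a ^ 3 * a) := by ring
      rw [this, ha3]; ring
    · show (3 * a * ω) ^ 4 = 108 * (3 * a * ω)
      have : (3 * a * ω) ^ 4 = 81 * (a ^ 3 * a) * (ω ^ 3 * ω) := by ring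
      rw [this, ha3, hωpow]; ring
    · show (3 * a * ω ^ 2) ^ 4 = 108 * (3 * a * ω ^ 2)
      have : (3 * a * ω ^ 2) ^ 4 = 81 * (a ^ 3 * a) * (ω ^ 3 * ω ^ 3 * ω ^ 2) := by ring
      rw [this, ha3, hωpow]; ring
  refine ⟨?_, ?_, ?_⟩
  · -- characteristic polynomial
    have hc : U.charmatrix
        = !![X, 0, -C 3, 0; -C 3, X, 0, -C 3; 0, -C 6, X, 0; 0, 0, -C 3, X] := by
      ext i j
      fin_cases i <;> fin_cases j <;>
        simp [U, Matrix.charmatrix_apply, Matrix.diagonal_apply, Matrix.vecHead, Matrix.vecTail]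
    rw [Matrix.charpoly, hc]
    simp [Matrix.det_succ_row_zero, Fin.sum_univ_succ, Fin.succAbove, map_ofNat]
    ring
  · -- injectivity
    have h3a : (3 : ℂ) * a ≠ 0 := mul_ne_zero (by norm_num) ha0
    have n01 : (0 : ℂ) ≠ 3 * a := fun h => h3a h.symm
    have n02 : (0 : ℂ) ≠ 3 * a * ω := fun h => mul_ne_zero h3a hω0 h.symm
    have n03 : (0 : ℂ) ≠ 3 * a * ω ^ 2 := fun h => mul_ne_zero h3a (pow_ne_zero 2 hω0) h.symm
    have n12 : (3 : ℂ) * a ≠ 3 * a * ω := by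
      intro h
      apply hω1
      have := mul_left_cancel₀ h3a (by rw [mul_one]; exact h : 3 * a * 1 = 3 * a * ω)
      exact this.symm
    have n13 : (3 : ℂ) * a ≠ 3 * a * ω ^ 2 := by
      intro h
      apply hω21
      have := mul_left_cancel₀ h3a (by rw [mul_one]; exact h : 3 * a * 1 = 3 * a * ω ^ 2)
      exact this.symm
    have n23 : (3 : ℂ) * a * ω ≠ 3 * a * ω ^ 2 := by
      intro h
      exact hωω2 (mul_left_cancel₀ h3a h)
    intro i j h
    fin_cases i <;> fin_cases j <;> simp only [ev, Matrix.cons_val_zero, Matrix.cons_val_one,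
      Matrix.head_cons, Matrix.cons_val_two, Matrix.tail_cons, Matrix.cons_val_three] at h <;>
      first
      | rfl
      | exact absurd h n01 | exact absurd h n02 | exact absurd h n03
      | exact absurd h n01.symm | exact absurd h n02.symm | exact absurd h n03.symm
      | exact absurd h n12 | exact absurd h n13 | exact absurd h n23
      | exact absurd h n12.symm | exact absurd h n13.symm | exact absurd h n23.symm
  · -- eigenvalues
    intro i
    set μ := ev i with hμ
    have hdet : (U - μ • 1).det = 0 := by
      have h4 := hroot i
      rw [← hμ] at h4
      have hc : U - μ • 1 = !![-μ, 0, 3, 0; 3, -μ, 0, 3; 0, 6, -μ, 0; 0, 0, 3, -μ] := by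
        ext i' j'
        fin_cases i' <;> fin_cases j' <;>
          simp [U, Matrix.one_apply, Matrix.vecHead, Matrix.vecTail]
      have hd : (U - μ • 1).det = μ ^ 4 - 108 * μ := by
        rw [hc]
        simp [Matrix.det_succ_row_zero, Fin.sum_univ_succ, Fin.succAbove]
        ring
      rw [hd]
      linear_combination h4
    obtain ⟨v, hv0, hv⟩ := Matrix.exists_mulVec_eq_zero_iff.mpr hdet
    have hvec : Matrix.toLin' U v = μ • v := by
      rw [Matrix.sub_mulVec, sub_eq_zero, Matrix.smul_mulVec, Matrix.one_mulVec] at hv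
      rw [Matrix.toLin'_apply, hv]
    exact Module.End.hasEigenvalue_of_hasEigenvector
      ⟨Module.End.mem_eigenspace_iff.mpr hvec, hv0⟩
end

section
/- Let y: ℂ* → ℂ⁴ satisfy the ODE system dy/dz = (𝒰 + μ/z)y, where 𝒰 is the matrix with rows (0,0,3,0),(3,0,0,3),(0,6,0,0),(0,0,3,0) and μ = diag(−3/2, −1/2, 1/2, 3/2). If one writes y₄(z) = z^{3/2}φ(z), then φ satisfies the scalar ODE D⁴φ − 108 z³ Dφ − 162 z³ φ = 0 with D = z·d/dz, and conversely y₁, y₂, y₃ are determined from φ by y₃ = (1/3) z^{3/2} φ', y₂ = (1/18)(z^{3/2} φ'' + z^{1/2} φ'), y₁ = (z² φ''' + φ' + 3z φ'' − 54 z² φ)/(54 √z). -/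
/-- Reduction of the quantum differential equation of `LG(2,4)` at `q = 1` to a scalar
fourth-order ODE.  On a simply connected open domain `s ⊆ ℂ*` with a holomorphic choice
`z12` of `√z` (and `z32 z = z^{3/2} = z · √z`), if `y = (y₁,y₂,y₃,y₄)` solves
`dy/dz = (𝒰 + μ/z) y` with `𝒰` the Euler multiplication matrix and
`μ = diag(−3/2,−1/2,1/2,3/2)`, and `y₄(z) = z^{3/2} φ(z)` with `φ` holomorphic, then `φ`
satisfies `D⁴φ − 108 z³ Dφ − 162 z³ φ = 0` (`D = z d/dz`) and
`y₃ = (1/3) z^{3/2} φ'`, `y₂ = (1/18)(z^{3/2} φ'' + z^{1/2} φ')`,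
`y₁ = (z² φ''' + φ' + 3z φ'' − 54 z² φ)/(54 √z)`. -/
theorem LG24_qde_reduction_to_scalar_ODE
    (s : Set ℂ) (hs : IsOpen s) (hs0 : (0 : ℂ) ∉ s)
    (y₁ y₂ y₃ y₄ φ z12 : ℂ → ℂ)
    (hz12 : DifferentiableOn ℂ z12 s)
    (hz12sq : ∀ z ∈ s, z12 z ^ 2 = z)
    (hφ : DifferentiableOn ℂ φ s)
    (hφ' : DifferentiableOn ℂ (deriv φ) s)
    (hφ'' : DifferentiableOn ℂ (deriv (deriv φ)) s)
    (hy₄ : ∀ z ∈ s, y₄ z = z * z12 z * φ z)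
    (hode₁ : ∀ z ∈ s, HasDerivAt y₁ (3 * y₃ z - 3 / (2 * z) * y₁ z) z)
    (hode₂ : ∀ z ∈ s, HasDerivAt y₂ (3 * y₁ z + 3 * y₄ z - 1 / (2 * z) * y₂ z) z)
    (hode₃ : ∀ z ∈ s, HasDerivAt y₃ (6 * y₂ z + 1 / (2 * z) * y₃ z) z)
    (hode₄ : ∀ z ∈ s, HasDerivAt y₄ (3 * y₃ z + 3 / (2 * z) * y₄ z) z) :
    let D : (ℂ → ℂ) → (ℂ → ℂ) := fun f z => z * deriv f z
    ∀ z ∈ s,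
      (D (D (D (D φ))) z - 108 * z ^ 3 * D φ z - 162 * z ^ 3 * φ z = 0) ∧
      y₃ z = (1 / 3) * (z * z12 z) * deriv φ z ∧
      y₂ z = (1 / 18) * ((z * z12 z) * deriv (deriv φ) z + z12 z * deriv φ z) ∧
      y₁ z = (z ^ 2 * deriv (deriv (deriv φ)) z + deriv φ z
          + 3 * z * deriv (deriv φ) z - 54 * z ^ 2 * φ z) / (54 * z12 z) := by

  have hmem : ∀ z ∈ s, s ∈ nhds z := fun z hz => hs.mem_nhds hz
  have hz0 : ∀ z ∈ s, z ≠ 0 := by intro z hz h; exact hs0 (h ▸ hz)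
  have ht0 : ∀ z ∈ s, z12 z ≠ 0 := by
    intro z hz h
    apply hz0 z hz
    rw [← hz12sq z hz, h]; ring
  have hφd : ∀ z ∈ s, HasDerivAt φ (deriv φ z) z := fun z hz =>
    (hφ.differentiableAt (hmem z hz)).hasDerivAt
  have hφ1d : ∀ z ∈ s, HasDerivAt (deriv φ) (deriv (deriv φ) z) z := fun z hz =>
    (hφ'.differentiableAt (hmem z hz)).hasDerivAt
  have hφ2d : ∀ z ∈ s, HasDerivAt (deriv (deriv φ)) (deriv (deriv (deriv φ)) z) z := fun z hz =>
    (hφ''.differentiableAt (hmem z hz)).hasDerivAt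
  have hz12d : ∀ z ∈ s, HasDerivAt z12 (1 / (2 * z12 z)) z := by
    intro z hz
    have hd : DifferentiableAt ℂ z12 z := hz12.differentiableAt (hmem z hz)
    have h1 := hd.hasDerivAt.pow 2
    have h2 : HasDerivAt (fun w => z12 w ^ 2) 1 z :=
      (hasDerivAt_id z).congr_of_eventuallyEq
        (Filter.eventuallyEq_of_mem (hmem z hz) fun w hw => hz12sq w hw)
    have key := h1.unique h2
    have h2' := ht0 z hz
    have : deriv z12 z = 1 / (2 * z12 z) := by
      push_cast at key
      field_simp at key ⊢
      linear_combination key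
    rw [← this]
    exact hd.hasDerivAt
  -- Step A: formula for y₃
  have hA : ∀ z ∈ s, y₃ z = (1 / 3) * (z * z12 z) * deriv φ z := by
    intro z hz
    have hF : HasDerivAt (fun w => w * z12 w * φ w)
        ((1 * z12 z + z * (1 / (2 * z12 z))) * φ z + z * z12 z * deriv φ z) z :=
      ((hasDerivAt_id' z).mul (hz12d z hz)).mul (hφd z hz)
    have hy : HasDerivAt y₄
        ((1 * z12 z + z * (1 / (2 * z12 z))) * φ z + z * z12 z * deriv φ z) z :=
      hF.congr_of_eventuallyEq (Filter.eventuallyEq_of_mem (hmem z hz) fun w hw => hy₄ w hw)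
    have eq := (hode₄ z hz).unique hy
    rw [hy₄ z hz] at eq
    have hzz := hz12sq z hz
    have h2 := ht0 z hz
    set t := z12 z with ht
    set a := φ z with ha
    set a1 := deriv φ z with ha1
    set Y3 := y₃ z with hY3
    rw [← hzz] at eq ⊢
    have h20 : t ^ 2 ≠ 0 := pow_ne_zero 2 h2
    field_simp at eq
    apply mul_left_cancel₀ (show (12:ℂ) * t ^ 3 ≠ 0 from mul_ne_zero (by norm_num) (pow_ne_zero 3 h2))
    linear_combination (2 * t ^ 3) * eq
  -- Step B: formula for y₂
  have hB : ∀ z ∈ s, y₂ z = (1 / 18) * ((z * z12 z) * deriv (deriv φ) z + z12 z * deriv φ z) := by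
    intro z hz
    have hF : HasDerivAt (fun w => 1 / 3 * (w * z12 w) * deriv φ w)
        ((0 * (z * z12 z) + 1 / 3 * (1 * z12 z + z * (1 / (2 * z12 z)))) * deriv φ z
          + 1 / 3 * (z * z12 z) * deriv (deriv φ) z) z :=
      ((hasDerivAt_const z ((1:ℂ)/3)).mul ((hasDerivAt_id' z).mul (hz12d z hz))).mul (hφ1d z hz)
    have hy : HasDerivAt y₃
        ((0 * (z * z12 z) + 1 / 3 * (1 * z12 z + z * (1 / (2 * z12 z)))) * deriv φ z
          + 1 / 3 * (z * z12 z) * deriv (deriv φ) z) z :=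
      hF.congr_of_eventuallyEq (Filter.eventuallyEq_of_mem (hmem z hz) fun w hw => hA w hw)
    have eq := (hode₃ z hz).unique hy
    rw [hA z hz] at eq
    have hzz := hz12sq z hz
    have h2 := ht0 z hz
    set t := z12 z with ht
    set a1 := deriv φ z with ha1
    set a2 := deriv (deriv φ) z with ha2
    set Y2 := y₂ z with hY2
    rw [← hzz] at eq ⊢
    have h20 : t ^ 2 ≠ 0 := pow_ne_zero 2 h2
    field_simp at eq
    apply mul_left_cancel₀ (show (648:ℂ) * t ^ 3 ≠ 0 from mul_ne_zero (by norm_num) (pow_ne_zero 3 h2))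
    linear_combination (18 * t ^ 3) * eq
  -- Step C: formula for y₁
  have hC : ∀ z ∈ s, y₁ z = (z ^ 2 * deriv (deriv (deriv φ)) z + deriv φ z
      + 3 * z * deriv (deriv φ) z - 54 * z ^ 2 * φ z) / (54 * z12 z) := by
    intro z hz
    have hF : HasDerivAt (fun w => (1 / 18) * ((w * z12 w) * deriv (deriv φ) w + z12 w * deriv φ w))
        (0 * ((z * z12 z) * deriv (deriv φ) z + z12 z * deriv φ z)
          + 1 / 18 * (((1 * z12 z + z * (1 / (2 * z12 z))) * deriv (deriv φ) z
              + (z * z12 z) * deriv (deriv (deriv φ)) z)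
            + (1 / (2 * z12 z) * deriv φ z + z12 z * deriv (deriv φ) z))) z :=
      (hasDerivAt_const z ((1:ℂ)/18)).mul
        ((((hasDerivAt_id' z).mul (hz12d z hz)).mul (hφ2d z hz)).add
          ((hz12d z hz).mul (hφ1d z hz)))
    have hy : HasDerivAt y₂
        (0 * ((z * z12 z) * deriv (deriv φ) z + z12 z * deriv φ z)
          + 1 / 18 * (((1 * z12 z + z * (1 / (2 * z12 z))) * deriv (deriv φ) z
              + (z * z12 z) * deriv (deriv (deriv φ)) z)
            + (1 / (2 * z12 z) * deriv φ z + z12 z * deriv (deriv φ) z))) z :=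
      hF.congr_of_eventuallyEq (Filter.eventuallyEq_of_mem (hmem z hz) fun w hw => hB w hw)
    have eq := (hode₂ z hz).unique hy
    rw [hy₄ z hz, hB z hz] at eq
    have hzz := hz12sq z hz
    have h2 := ht0 z hz
    set t := z12 z with ht
    set a := φ z with ha
    set a1 := deriv φ z with ha1
    set a2 := deriv (deriv φ) z with ha2
    set a3 := deriv (deriv (deriv φ)) z with ha3
    set Y1 := y₁ z with hY1
    rw [← hzz] at eq ⊢
    have h20 : t ^ 2 ≠ 0 := pow_ne_zero 2 h2
    field_simp at eq
    rw [eq_div_iff (show (54:ℂ) * t ≠ 0 from mul_ne_zero (by norm_num) h2)]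
    apply mul_left_cancel₀ (show (72:ℂ) * t ^ 2 ≠ 0 from mul_ne_zero (by norm_num) (pow_ne_zero 2 h2))
    linear_combination (36 * t ^ 2) * eq
  -- multiplied-out form of hC
  have hC2 : ∀ z ∈ s, z ^ 2 * deriv (deriv (deriv φ)) z
      = 54 * z12 z * y₁ z - deriv φ z - 3 * z * deriv (deriv φ) z + 54 * z ^ 2 * φ z := by
    intro z hz
    have h2 := ht0 z hz
    rw [hC z hz]
    field_simp
    ring
  -- derivative chain for D
  have hD2 : ∀ z ∈ s, deriv (fun w => w * deriv φ w) z
      = deriv φ z + z * deriv (deriv φ) z := by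
    intro z hz
    have h := ((hasDerivAt_id' z).mul (hφ1d z hz)).deriv
    rw [show (fun w => w * deriv φ w) = (fun x => x) * deriv φ from rfl, h]; ring
  have hF2eq : ∀ z ∈ s, z * deriv (fun u => u * deriv φ u) z
      = z * deriv φ z + z ^ 2 * deriv (deriv φ) z := by
    intro z hz
    rw [hD2 z hz]; ring
  have hG2d : ∀ z ∈ s, HasDerivAt (fun w => w * deriv φ w + w ^ 2 * deriv (deriv φ) w)
      (deriv φ z + 3 * z * deriv (deriv φ) z + z ^ 2 * deriv (deriv (deriv φ)) z) z := by
    intro z hz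
    have h := ((hasDerivAt_id' z).mul (hφ1d z hz)).add
      ((hasDerivAt_pow 2 z).mul (hφ2d z hz))
    convert h using 1
    · rfl
    · rfl
    · rfl
    push_cast
    ring
  have hF2d : ∀ z ∈ s, deriv (fun w => w * deriv (fun u => u * deriv φ u) w) z
      = deriv φ z + 3 * z * deriv (deriv φ) z + z ^ 2 * deriv (deriv (deriv φ)) z := by
    intro z hz
    exact ((hG2d z hz).congr_of_eventuallyEq
      (Filter.eventuallyEq_of_mem (hmem z hz) fun w hw => hF2eq w hw)).deriv
  have hF3eq : ∀ z ∈ s, z * deriv (fun v => v * deriv (fun u => u * deriv φ u) v) z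
      = 54 * (z * z12 z) * y₁ z + 54 * z ^ 3 * φ z := by
    intro z hz
    rw [hF2d z hz]
    linear_combination z * hC2 z hz
  have hG3d : ∀ z ∈ s, HasDerivAt (fun w => 54 * (w * z12 w) * y₁ w + 54 * w ^ 3 * φ w)
      ((0 * (z * z12 z) + 54 * (1 * z12 z + z * (1 / (2 * z12 z)))) * y₁ z
        + 54 * (z * z12 z) * (3 * y₃ z - 3 / (2 * z) * y₁ z)
        + ((0 * z ^ 3 + 54 * ((3 : ℕ) * z ^ (3 - 1))) * φ z + 54 * z ^ 3 * deriv φ z)) z := by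
    intro z hz
    exact (((hasDerivAt_const z (54:ℂ)).mul ((hasDerivAt_id' z).mul (hz12d z hz))).mul
      (hode₁ z hz)).add
      (((hasDerivAt_const z (54:ℂ)).mul (hasDerivAt_pow 3 z)).mul (hφd z hz))
  have hF3d : ∀ z ∈ s, deriv (fun w => w * deriv (fun v => v * deriv (fun u => u * deriv φ u) v) w) z
      = (0 * (z * z12 z) + 54 * (1 * z12 z + z * (1 / (2 * z12 z)))) * y₁ z
        + 54 * (z * z12 z) * (3 * y₃ z - 3 / (2 * z) * y₁ z)
        + ((0 * z ^ 3 + 54 * ((3 : ℕ) * z ^ (3 - 1))) * φ z + 54 * z ^ 3 * deriv φ z) := by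
    intro z hz
    exact ((hG3d z hz).congr_of_eventuallyEq
      (Filter.eventuallyEq_of_mem (hmem z hz) fun w hw => hF3eq w hw)).deriv
  intro D z hz
  refine ⟨?_, hA z hz, hB z hz, hC z hz⟩
  show z * deriv (fun w => w * deriv (fun v => v * deriv (fun u => u * deriv φ u) v) w) z
      - 108 * z ^ 3 * (z * deriv φ z) - 162 * z ^ 3 * φ z = 0
  rw [hF3d z hz, hA z hz]
  have hzz := hz12sq z hz
  have h2 := ht0 z hz
  set t := z12 z with ht
  set a := φ z with ha
  set a1 := deriv φ z with ha1
  set Y1 := y₁ z with hY1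
  rw [← hzz]
  have h20 : t ^ 2 ≠ 0 := pow_ne_zero 2 h2
  push_cast
  field_simp
  ring
end
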